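/- Let F be a field and A a locally matrix algebra over F, and let e ∈ A be a nonzero idempotent such that the corner algebra eAe is finite-dimensional over F. Then eAe is isomorphic as an F-algebra to a matrix algebra M_m(F) for some m ≥ 1. -/

import Mathlib

set_option synthInstance.maxHeartbeats 1000000
set_option maxHeartbeats 1000000


/-- A (not necessarily unital) associative algebra `A` over a field `F` is a *locally matrix
algebra* if every finite subset of `A` is contained in a subalgebra of `A` that is isomorphic
to a matrix algebra `Mₙ(F)` for some `n ≥ 1`. -/
def IsLocallyMatrix (F A : Type*) [Field F] [NonUnitalRing A] [Module F A]
    [SMulCommClass F A A] [IsScalarTower F A A] : Prop :=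
  ∀ s : Finset A, ∃ (B : NonUnitalSubalgebra F A) (n : ℕ), 0 < n ∧ (s : Set A) ⊆ (B : Set A) ∧
    ∃ f : B →ₙₐ[F] Matrix (Fin n) (Fin n) F, Function.Bijective f

/-- The corner `eAe = {e * x * e | x ∈ A}` of an algebra `A` at an idempotent `e`,
as a (non-unital) subalgebra of `A`. -/
def corner (F A : Type*) [Field F] [NonUnitalRing A] [Module F A]
    [SMulCommClass F A A] [IsScalarTower F A A] (e : A) :
    NonUnitalSubalgebra F A where
  carrier := Set.range fun x : A => e * x * e
  add_mem' := by
    rintro _ _ ⟨x, rfl⟩ ⟨y, rfl⟩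
    exact ⟨x + y, by simp [mul_add, add_mul]⟩
  zero_mem' := ⟨0, by simp⟩
  mul_mem' := by
    rintro _ _ ⟨x, rfl⟩ ⟨y, rfl⟩
    refine ⟨x * e * e * y, ?_⟩
    simp only [mul_assoc]
  smul_mem' := by
    rintro c _ ⟨x, rfl⟩
    exact ⟨c • x, by simp [smul_mul_assoc, mul_smul_comm]⟩

/-- The linear map sending a matrix `X` to the endomorphism of `range (toLin' E)`
given by `v ↦ E * (X * v)` (compress-then-restrict). -/
noncomputable def cornerPsi {F : Type*} [Field F] {n : ℕ} (E : Matrix (Fin n) (Fin n) F) :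
    Matrix (Fin n) (Fin n) F →ₗ[F] Module.End F (LinearMap.range (Matrix.toLin' E)) where
  toFun X := (Matrix.toLin' E).rangeRestrict ∘ₗ
    Matrix.toLin' X ∘ₗ (LinearMap.range (Matrix.toLin' E)).subtype
  map_add' X Y := by
    simp only [map_add, LinearMap.add_comp, LinearMap.comp_add]
  map_smul' c X := by
    simp only [map_smul, LinearMap.smul_comp, LinearMap.comp_smul, RingHom.id_apply]

/-- The corner of a matrix algebra at a nonzero idempotent `E` maps onto a smaller
matrix algebra, multiplicatively on corner elements, injectively on corner elements,
and surjectively. -/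
theorem matrix_corner_equiv (F : Type*) [Field F] (n : ℕ) (E : Matrix (Fin n) (Fin n) F)
    (hE : E * E = E) (hEne : E ≠ 0) :
    ∃ m : ℕ, 0 < m ∧ ∃ φ : Matrix (Fin n) (Fin n) F →ₗ[F] Matrix (Fin m) (Fin m) F,
      (∀ X Y, φ (X * E * Y) = φ X * φ Y) ∧
      (∀ X, φ (E * X * E) = 0 → E * X * E = 0) ∧
      (∀ M, ∃ X, φ (E * X * E) = M) := by
  classical
  set p : (Fin n → F) →ₗ[F] (Fin n → F) := Matrix.toLin' E with hp
  set V : Submodule F (Fin n → F) := LinearMap.range p with hV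
  have hpp : ∀ v, p (p v) = p v := by
    intro v
    have h1 : Matrix.toLin' (E * E) v = p v := by rw [hE]
    rw [Matrix.toLin'_mul] at h1
    exact h1
  have hVmem : ∀ v : V, p (v : Fin n → F) = (v : Fin n → F) := by
    rintro ⟨_, w, rfl⟩
    exact hpp w
  -- V is a nonzero finite-dimensional space
  have hpne : p ≠ 0 := by
    intro h
    apply hEne
    have := (Matrix.toLin' (R := F) (n := Fin n) (m := Fin n)).injective
      (a₁ := E) (a₂ := 0) (by rw [map_zero]; exact h)
    exact this
  have hVne : V ≠ ⊥ := by rw [hV, Ne, LinearMap.range_eq_bot]; exact hpne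
  have hmpos : 0 < Module.finrank F V := by
    rcases Nat.eq_zero_or_pos (Module.finrank F V) with h | h
    · exact absurd (Submodule.finrank_eq_zero.mp h) hVne
    · exact h
  -- identify End F V with matrices
  let θ : Module.End F V ≃ₐ[F] Matrix (Fin (Module.finrank F V)) (Fin (Module.finrank F V)) F :=
    algEquivMatrix (Module.finBasis F V)
  let Ψ := cornerPsi E
  have hΨapp : ∀ (X : Matrix (Fin n) (Fin n) F) (v : V),
      ((Ψ X v : V) : Fin n → F) = p (Matrix.toLin' X (v : Fin n → F)) := fun X v => rfl
  have hΨmul : ∀ X Y, Ψ (X * E * Y) = Ψ X * Ψ Y := by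
    intro X Y
    apply LinearMap.ext
    intro v
    apply Subtype.ext
    rw [Module.End.mul_apply, hΨapp, hΨapp, hΨapp, Matrix.toLin'_mul, Matrix.toLin'_mul]
    simp only [LinearMap.comp_apply]
    rfl
  refine ⟨Module.finrank F V, hmpos, θ.toLinearMap ∘ₗ Ψ, ?_, ?_, ?_⟩
  · intro X Y
    simp only [LinearMap.comp_apply, AlgEquiv.toLinearMap_apply]
    rw [hΨmul, map_mul]
  · -- injectivity on corner elements
    intro X h0
    simp only [LinearMap.comp_apply, AlgEquiv.toLinearMap_apply] at h0
    have hΨ0 : Ψ (E * X * E) = 0 := by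
      apply θ.injective
      rw [h0, map_zero]
    apply (Matrix.toLin' (R := F) (n := Fin n) (m := Fin n)).injective
    rw [map_zero]
    apply LinearMap.ext
    intro v
    have hv : ((Ψ (E * X * E) ⟨p v, LinearMap.mem_range_self p v⟩ : V) : Fin n → F) = 0 := by
      rw [hΨ0]; rfl
    rw [hΨapp] at hv
    have hcalc : Matrix.toLin' (E * X * E) v
        = p (Matrix.toLin' (E * X * E) (p v)) := by
      rw [Matrix.toLin'_mul, Matrix.toLin'_mul]
      simp only [LinearMap.comp_apply]
      show p (Matrix.toLin' X (p v)) = p (p (Matrix.toLin' X (p (p v))))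
      rw [hpp v, hpp]
    rw [hcalc, hv]
    rfl
  · -- surjectivity
    intro M
    set u : Module.End F V := θ.symm M with hu
    set U : (Fin n → F) →ₗ[F] (Fin n → F) :=
      V.subtype ∘ₗ u ∘ₗ p.rangeRestrict with hU
    refine ⟨LinearMap.toMatrix' U, ?_⟩
    simp only [LinearMap.comp_apply, AlgEquiv.toLinearMap_apply]
    have hΨU : Ψ (E * LinearMap.toMatrix' U * E) = u := by
      apply LinearMap.ext
      intro v
      apply Subtype.ext
      rw [hΨapp, Matrix.toLin'_mul, Matrix.toLin'_mul]
      simp only [LinearMap.comp_apply]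
      rw [Matrix.toLin'_toMatrix']
      show p (p (U (p (v : Fin n → F)))) = ((u v : V) : Fin n → F)
      rw [hVmem v]
      have hq : p.rangeRestrict ((v : Fin n → F)) = v := Subtype.ext (hVmem v)
      have hUv : U (v : Fin n → F) = ((u v : V) : Fin n → F) := by
        show ((u (p.rangeRestrict (v : Fin n → F)) : V) : Fin n → F) = _
        rw [hq]
      rw [hUv, hVmem (u v), hVmem (u v)]
    rw [hΨU, hu, AlgEquiv.apply_symm_apply]

/-- If `A` is a locally matrix algebra over a field `F` and `e ∈ A` is a nonzero idempotent
whose corner algebra `eAe` is finite-dimensional over `F`, then `eAe` is isomorphic as an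
`F`-algebra to a matrix algebra `M_m(F)` for some `m ≥ 1`. -/
theorem corner_isMatrixAlgebra (F A : Type*) [Field F] [NonUnitalRing A] [Module F A]
    [SMulCommClass F A A] [IsScalarTower F A A]
    (hA : IsLocallyMatrix F A)
    (e : A) (he : e * e = e) (hne : e ≠ 0)
    (hfd : Module.Finite F (corner F A e)) :
    ∃ m : ℕ, 0 < m ∧
      ∃ f : corner F A e →ₙₐ[F] Matrix (Fin m) (Fin m) F, Function.Bijective f := by
  classical
  haveI : FiniteDimensional F (corner F A e) := hfd
  -- a finite basis of the corner
  let b := Module.finBasis F (corner F A e)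
  let s : Finset A :=
    insert e (Finset.image (fun i => ((b i : corner F A e) : A)) Finset.univ)
  obtain ⟨B, n, hn, hsB, fB, hfB⟩ := hA s
  have heB : e ∈ B := hsB (Finset.mem_insert_self e _)
  have hbB : ∀ i, ((b i : corner F A e) : A) ∈ B := fun i =>
    hsB (Finset.mem_insert_of_mem (Finset.mem_image_of_mem _ (Finset.mem_univ i)))
  -- every element of the corner lies in B
  have hCB : ∀ c : corner F A e, (c : A) ∈ B := by
    intro c
    have hc : (c : A) = ∑ i, (b.repr c) i • ((b i : corner F A e) : A) := by
      conv_lhs => rw [← b.sum_repr c]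
      push_cast
      rfl
    rw [hc]
    exact sum_mem fun i _ => SMulMemClass.smul_mem _ (hbB i)
  -- the idempotent in the matrix algebra
  set E : Matrix (Fin n) (Fin n) F := fB ⟨e, heB⟩ with hEdef
  have hmulB : ∀ (x y : A) (hx : x ∈ B) (hy : y ∈ B),
      (⟨x, hx⟩ : B) * ⟨y, hy⟩ = ⟨x * y, mul_mem hx hy⟩ := fun _ _ _ _ => rfl
  have hE : E * E = E := by
    rw [hEdef, ← map_mul, hmulB e e heB heB]
    congr 1
    exact Subtype.ext he
  have hEne : E ≠ 0 := by
    intro h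
    apply hne
    have h0 : fB ⟨e, heB⟩ = fB 0 := by rw [map_zero, ← hEdef, h]
    exact congrArg Subtype.val (hfB.1 h0)
  obtain ⟨m, hm, φ, hφmul, hφinj, hφsurj⟩ := matrix_corner_equiv F n E hE hEne
  -- every corner element `c` satisfies `c * e = c`, `e * c = c`
  have hce : ∀ c : corner F A e, (c : A) * e = (c : A) := by
    rintro ⟨_, x, rfl⟩
    show e * x * e * e = e * x * e
    rw [mul_assoc, he]
  have hec : ∀ c : corner F A e, e * (c : A) = (c : A) := by
    rintro ⟨_, x, rfl⟩
    show e * (e * x * e) = e * x * e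
    rw [← mul_assoc, ← mul_assoc, he]
  -- the map
  let g0 : corner F A e → Matrix (Fin m) (Fin m) F := fun c => φ (fB ⟨(c : A), hCB c⟩)
  have hg_smul : ∀ (r : F) (c : corner F A e), g0 (r • c) = r • g0 c := by
    intro r c
    show φ (fB ⟨((r • c : corner F A e) : A), _⟩) = r • φ (fB ⟨(c : A), hCB c⟩)
    have h1 : (⟨((r • c : corner F A e) : A), hCB (r • c)⟩ : B)
        = r • ⟨(c : A), hCB c⟩ := Subtype.ext rfl
    rw [h1, map_smul, map_smul]
  have hg_zero : g0 0 = 0 := by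
    show φ (fB ⟨((0 : corner F A e) : A), _⟩) = 0
    have h1 : (⟨((0 : corner F A e) : A), hCB 0⟩ : B) = 0 := Subtype.ext rfl
    rw [h1, map_zero, map_zero]
  have hg_add : ∀ c₁ c₂ : corner F A e, g0 (c₁ + c₂) = g0 c₁ + g0 c₂ := by
    intro c₁ c₂
    show φ (fB ⟨((c₁ + c₂ : corner F A e) : A), _⟩) = _
    have h1 : (⟨((c₁ + c₂ : corner F A e) : A), hCB (c₁ + c₂)⟩ : B)
        = ⟨(c₁ : A), hCB c₁⟩ + ⟨(c₂ : A), hCB c₂⟩ := Subtype.ext rfl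
    rw [h1, map_add, map_add]
  have hg_mul : ∀ c₁ c₂ : corner F A e, g0 (c₁ * c₂) = g0 c₁ * g0 c₂ := by
    intro c₁ c₂
    show φ (fB ⟨((c₁ * c₂ : corner F A e) : A), _⟩) = _
    have h1 : (⟨((c₁ * c₂ : corner F A e) : A), hCB (c₁ * c₂)⟩ : B)
        = ⟨(c₁ : A), hCB c₁⟩ * ⟨e, heB⟩ * ⟨(c₂ : A), hCB c₂⟩ := by
      apply Subtype.ext
      show ((c₁ : A) * (c₂ : A)) = (c₁ : A) * e * (c₂ : A)
      rw [hce c₁]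
    have h2 : fB (⟨(c₁ : A), hCB c₁⟩ * ⟨e, heB⟩ * ⟨(c₂ : A), hCB c₂⟩)
        = fB ⟨(c₁ : A), hCB c₁⟩ * fB ⟨e, heB⟩ * fB ⟨(c₂ : A), hCB c₂⟩ := by
      rw [map_mul, map_mul]
    rw [h1, h2]
    exact hφmul _ _
  have hg_ker : ∀ c : corner F A e, g0 c = 0 → c = 0 := by
    intro c hc0
    have hform : (⟨(c : A), hCB c⟩ : B) = ⟨e, heB⟩ * ⟨(c : A), hCB c⟩ * ⟨e, heB⟩ := by
      apply Subtype.ext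
      show (c : A) = e * (c : A) * e
      rw [hec c, hce c]
    have hzero : E * fB ⟨(c : A), hCB c⟩ * E = 0 := by
      apply hφinj
      rw [hEdef, ← map_mul, ← map_mul, ← hform]
      exact hc0
    have hfc : fB ⟨(c : A), hCB c⟩ = 0 := by
      rw [hform, map_mul, map_mul, ← hEdef]
      exact hzero
    have h0 : (⟨(c : A), hCB c⟩ : B) = 0 := hfB.1 (by rw [hfc, map_zero])
    have hc : (c : A) = 0 := congrArg Subtype.val h0
    exact Subtype.ext hc
  have hg_inj : Function.Injective g0 := by
    intro c₁ c₂ hcc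
    have hsub : g0 (c₁ - c₂) = 0 := by
      have h1 : (⟨((c₁ - c₂ : corner F A e) : A), hCB (c₁ - c₂)⟩ : B)
          = ⟨(c₁ : A), hCB c₁⟩ - ⟨(c₂ : A), hCB c₂⟩ := Subtype.ext rfl
      show φ (fB ⟨((c₁ - c₂ : corner F A e) : A), _⟩) = 0
      rw [h1, map_sub, map_sub]
      exact sub_eq_zero_of_eq hcc
    exact sub_eq_zero.mp (hg_ker _ hsub)
  have hg_surj : Function.Surjective g0 := by
    intro M
    obtain ⟨X, hX⟩ := hφsurj M
    obtain ⟨y, hy⟩ := hfB.2 X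
    have hmem : e * (y : A) * e ∈ corner F A e := ⟨(y : A), rfl⟩
    refine ⟨⟨e * (y : A) * e, hmem⟩, ?_⟩
    show φ (fB ⟨e * (y : A) * e, _⟩) = M
    have h1 : (⟨e * (y : A) * e, hCB ⟨e * (y : A) * e, hmem⟩⟩ : B)
        = ⟨e, heB⟩ * y * ⟨e, heB⟩ := Subtype.ext rfl
    have h2 : fB (⟨e, heB⟩ * y * ⟨e, heB⟩)
        = fB ⟨e, heB⟩ * fB y * fB ⟨e, heB⟩ := by rw [map_mul, map_mul]
    rw [h1, h2, hy, ← hEdef]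
    exact hX
  exact ⟨m, hm, ⟨⟨⟨g0, hg_smul⟩, hg_zero, hg_add⟩, hg_mul⟩, hg_inj, hg_surj⟩
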